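/- Let the primal problem have optimal value f⋆ with optimal dual multiplier u⋆ ∈ D (first m components ≥ 0), where f⋆ = L(x̄(u⋆), u⋆) = min_{x∈X} L(x, u⋆). For any dual feasible u and the Lagrangian minimizer x̄(u) ∈ X, f(x̄(u)) − f⋆ ≥ −‖u⋆‖ · Δ(x̄(u)), where Δ(x) = (‖Ax+b‖² + ∑_{i=1}^m max{0, g⁽ⁱ⁾(x)}²)^{1/2} is the infeasibility measure. -/

import Mathlib

open scoped RealInnerProductSpace

lemma cs2 (a b c d : ℝ) (ha : 0 ≤ a) (hb : 0 ≤ b) (hc : 0 ≤ c) (hd : 0 ≤ d) :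
    a * c + b * d ≤ Real.sqrt (a ^ 2 + b ^ 2) * Real.sqrt (c ^ 2 + d ^ 2) := by
  have hP : Real.sqrt (a ^ 2 + b ^ 2) ^ 2 = a ^ 2 + b ^ 2 :=
    Real.sq_sqrt (by positivity)
  have hQ : Real.sqrt (c ^ 2 + d ^ 2) ^ 2 = c ^ 2 + d ^ 2 :=
    Real.sq_sqrt (by positivity)
  calc a * c + b * d = Real.sqrt ((a * c + b * d) ^ 2) := (Real.sqrt_sq (by positivity)).symm
    _ ≤ Real.sqrt ((a ^ 2 + b ^ 2) * (c ^ 2 + d ^ 2)) :=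
        Real.sqrt_le_sqrt (by nlinarith [sq_nonneg (a * d - b * c)])
    _ = _ := Real.sqrt_mul (by positivity) _

/-- Lower bound on primal suboptimality via infeasibility: with dual optimum
`u⋆ = (μ⋆, λ⋆)` (μ⋆ ≥ 0) such that `f⋆ = min_{x∈X} L(x, u⋆)`, for any `x̄ ∈ X`:
`f(x̄) − f⋆ ≥ −‖u⋆‖·Δ(x̄)` where
`Δ(x) = √(‖Ax+b‖² + ∑ᵢ max{0, g⁽ⁱ⁾(x)}²)` and `‖u⋆‖ = √(‖μ⋆‖² + ‖λ⋆‖²)`. -/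
theorem primal_suboptimality_lower_bound {n m p : ℕ}
    (X : Set (EuclideanSpace ℝ (Fin n)))
    (f : EuclideanSpace ℝ (Fin n) → ℝ)
    (g : Fin m → EuclideanSpace ℝ (Fin n) → ℝ)
    (A : EuclideanSpace ℝ (Fin n) →L[ℝ] EuclideanSpace ℝ (Fin p))
    (b : EuclideanSpace ℝ (Fin p))
    (μs : EuclideanSpace ℝ (Fin m)) (lams : EuclideanSpace ℝ (Fin p))
    (fstar : ℝ)
    (hμs : ∀ i, 0 ≤ μs i)
    -- `f⋆ = min_{x ∈ X} L(x, u⋆)`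
    (hfstar : ∀ x ∈ X, fstar ≤ f x + (∑ i, μs i * g i x) + ⟪lams, A x + b⟫)
    (hattain : ∃ xs ∈ X, fstar = f xs + (∑ i, μs i * g i xs) + ⟪lams, A xs + b⟫)
    (xb : EuclideanSpace ℝ (Fin n)) (hxb : xb ∈ X) :
    f xb - fstar ≥ -(Real.sqrt (‖μs‖ ^ 2 + ‖lams‖ ^ 2)) *
      Real.sqrt (‖A xb + b‖ ^ 2 + ∑ i, (max 0 (g i xb)) ^ 2) := by
  have h1 := hfstar xb hxb
  -- bound the penalty term
  set v : EuclideanSpace ℝ (Fin m) := WithLp.toLp 2 (fun i => max 0 (g i xb)) with hv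
  have hsum : (∑ i, μs i * g i xb) ≤ ⟪μs, v⟫ := by
    rw [real_inner_comm, PiLp.inner_apply]
    apply Finset.sum_le_sum
    intro i _
    simp only [RCLike.inner_apply, conj_trivial, hv]
    nlinarith [hμs i, le_max_right 0 (g i xb)]
  have hnv : ‖v‖ = Real.sqrt (∑ i, (max 0 (g i xb)) ^ 2) := by
    rw [EuclideanSpace.norm_eq]
    congr 1
    apply Finset.sum_congr rfl
    intro i _
    rw [Real.norm_eq_abs, sq_abs]
  have h2 : (∑ i, μs i * g i xb) ≤ ‖μs‖ * Real.sqrt (∑ i, (max 0 (g i xb)) ^ 2) := by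
    calc (∑ i, μs i * g i xb) ≤ ⟪μs, v⟫ := hsum
      _ ≤ ‖μs‖ * ‖v‖ := real_inner_le_norm _ _
      _ = _ := by rw [hnv]
  have h3 : ⟪lams, A xb + b⟫ ≤ ‖lams‖ * ‖A xb + b‖ := real_inner_le_norm _ _
  have h4 : ‖μs‖ * Real.sqrt (∑ i, (max 0 (g i xb)) ^ 2) + ‖lams‖ * ‖A xb + b‖ ≤
      Real.sqrt (‖μs‖ ^ 2 + ‖lams‖ ^ 2) *
        Real.sqrt ((Real.sqrt (∑ i, (max 0 (g i xb)) ^ 2)) ^ 2 + ‖A xb + b‖ ^ 2) :=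
    cs2 _ _ _ _ (norm_nonneg _) (norm_nonneg _) (Real.sqrt_nonneg _) (norm_nonneg _)
  rw [Real.sq_sqrt (by positivity)] at h4
  have heq : (∑ i, (max 0 (g i xb)) ^ 2) + ‖A xb + b‖ ^ 2
      = ‖A xb + b‖ ^ 2 + ∑ i, (max 0 (g i xb)) ^ 2 := by ring
  rw [heq] at h4
  nlinarith [h1, h2, h3, h4]
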